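/- Let p, q ∈ ℝ⁴ with |p| = |q| = 1, let ν be a unit vector orthogonal to p, Φ > 0, and suppose Φ(1 - ⟨p,q⟩) + ⟨q,ν⟩ = 0 with q ≠ p. Setting d = |q - p| and ℓ = (q - p)/d, the reflection R(z) = z - 2⟨ℓ,z⟩ℓ satisfies R(ν) = ν + Φ d ℓ. -/

import Mathlib

open scoped RealInnerProductSpace

/-- If `p, q` are unit vectors in ℝ⁴ with `q ≠ p`, `ν` a unit vector with
`⟪p, ν⟫ = 0`, `Φ > 0`, and `Φ(1 - ⟪p,q⟫) + ⟪q,ν⟫ = 0`, then with `d = ‖q - p‖` and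
`ℓ = d⁻¹ • (q - p)`, the reflection `R z = z - 2⟪ℓ,z⟫ • ℓ` satisfies `R ν = ν + (Φ d) • ℓ`. -/
theorem stmt1 (p q ν : EuclideanSpace ℝ (Fin 4)) (Φ : ℝ) (hΦ : 0 < Φ)
    (hp : ‖p‖ = 1) (hq : ‖q‖ = 1) (hν : ‖ν‖ = 1) (horth : ⟪p, ν⟫ = 0)
    (hne : q ≠ p) (hZ : Φ * (1 - ⟪p, q⟫) + ⟪q, ν⟫ = 0) :
    let d : ℝ := ‖q - p‖
    let ℓ : EuclideanSpace ℝ (Fin 4) := d⁻¹ • (q - p)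
    ν - (2 * ⟪ℓ, ν⟫) • ℓ = ν + (Φ * d) • ℓ := by
  intro d ℓ
  have hd : d ≠ 0 := by
    simpa [d, sub_eq_zero] using hne
  have hd2 : d ^ 2 = 2 * (1 - ⟪p, q⟫) := by
    have := @norm_sub_sq_real (EuclideanSpace ℝ (Fin 4)) _ _ q p
    rw [hp, hq, real_inner_comm p q] at this
    simp only [d]
    rw [this]; ring
  have hℓν : ⟪ℓ, ν⟫ = d⁻¹ * ⟪q, ν⟫ := by
    rw [show ℓ = d⁻¹ • (q - p) from rfl, real_inner_smul_left, inner_sub_left, horth]; ring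
  have hqν : ⟪q, ν⟫ = -(Φ * (1 - ⟪p, q⟫)) := by linarith
  have key : -(2 * ⟪ℓ, ν⟫) = Φ * d := by
    rw [hℓν, hqν]
    have : 1 - ⟪p, q⟫ = d ^ 2 / 2 := by linarith
    rw [this]
    field_simp
  rw [sub_eq_add_neg, ← neg_smul, key]
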